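/- Let λ > 0 and on ℝ² define the weight w_λ(x₁,x₂) := (log(max{e, e/|x₂|}))^λ and the measure dμ := w_λ dm₂, where m₂ is 2-dimensional Lebesgue measure. Then there exist constants 0 < c ≤ C, depending only on λ, such that for every point x ∈ ℝ×{0} and every 0 < r < e^{−2λ}, the open axis-parallel square Q(x,r) with center x and side length r satisfies c·r²·(log(e/r))^λ ≤ μ(Q(x,r)) ≤ C·r²·(log(e/r))^λ. -/

import Mathlib

open MeasureTheory Set intervalIntegral

open MeasureTheory


/-- The weight `w_λ(x₁,x₂) = (log(max{e, e/|x₂|}))^λ` on `ℝ²`. -/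
noncomputable def wlam (lam : ℝ) (x : ℝ × ℝ) : ℝ :=
  Real.log (max (Real.exp 1) (Real.exp 1 / |x.2|)) ^ lam

/-- The weighted measure `dμ = w_λ dm₂` on `ℝ²`. -/
noncomputable def muW (lam : ℝ) : Measure (ℝ × ℝ) :=
  (volume : Measure (ℝ × ℝ)).withDensity fun x => ENNReal.ofReal (wlam lam x)

lemma glam_meas (lam : ℝ) :
    Measurable fun t : ℝ => ENNReal.ofReal (Real.log (max (Real.exp 1) (Real.exp 1 / |t|)) ^ lam) := by
  measurability

lemma wlam_meas (lam : ℝ) : Measurable fun x : ℝ × ℝ => ENNReal.ofReal (wlam lam x) := by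
  have := (glam_meas lam).comp (measurable_snd : Measurable fun x : ℝ × ℝ => x.2)
  exact this

lemma muW_prod (lam : ℝ) (A B : Set ℝ) (hA : MeasurableSet A) (hB : MeasurableSet B) :
    muW lam (A ×ˢ B) =
      volume A * ∫⁻ t in B,
        ENNReal.ofReal (Real.log (max (Real.exp 1) (Real.exp 1 / |t|)) ^ lam) := by
  rw [muW, withDensity_apply _ (hA.prod hB), Measure.volume_eq_prod, ← Measure.prod_restrict,
    lintegral_prod _ (wlam_meas lam).aemeasurable]
  simp only [wlam]
  rw [lintegral_const]
  simp [Measure.restrict_apply, mul_comm]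


lemma intInt_abs_rpow_pos (a : ℝ) (ha : 0 < a) :
    IntervalIntegrable (fun t : ℝ => |t| ^ (-(1/2) : ℝ)) volume 0 a := by
  rw [intervalIntegrable_iff_integrableOn_Ioc_of_le ha.le]
  have base : IntegrableOn (fun t : ℝ => t ^ (-(1/2) : ℝ)) (Ioc 0 a) volume :=
    (intervalIntegrable_rpow' (by norm_num) (a := 0) (b := a)).1
  exact base.congr_fun (fun x hx => by rw [abs_of_pos hx.1]) measurableSet_Ioc

lemma intInt_abs_rpow_neg (a : ℝ) (ha : 0 < a) :
    IntervalIntegrable (fun t : ℝ => |t| ^ (-(1/2) : ℝ)) volume (-a) 0 := by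
  have h := (intInt_abs_rpow_pos a ha).symm   -- a..0
  have := (IntervalIntegrable.iff_comp_neg).mp h
  simpa [abs_neg] using this

lemma lint_abs_rpow (a : ℝ) (ha : 0 < a) :
    ∫⁻ t in Ioo (-a) a, ENNReal.ofReal (|t| ^ (-(1/2) : ℝ)) =
      ENNReal.ofReal (4 * a ^ ((1:ℝ)/2)) := by
  have h1 := intInt_abs_rpow_pos a ha
  have h2 := intInt_abs_rpow_neg a ha
  have hint : IntegrableOn (fun t : ℝ => |t| ^ (-(1/2) : ℝ)) (Ioo (-a) a) volume := by
    refine IntegrableOn.mono_set ?_ Ioo_subset_Ioc_self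
    rw [← uIoc_of_le (by linarith : (-a) ≤ a), ← intervalIntegrable_iff]
    exact h2.trans h1
  rw [← ofReal_integral_eq_lintegral_ofReal hint
    (Filter.Eventually.of_forall fun x => Real.rpow_nonneg (abs_nonneg x) _)]
  congr 1
  have hIoo : ∫ t in Ioo (-a) a, |t| ^ (-(1/2) : ℝ) = ∫ t in (-a)..a, |t| ^ (-(1/2) : ℝ) := by
    rw [intervalIntegral.integral_of_le (by linarith), ← integral_Ioc_eq_integral_Ioo]
  have hpos : ∫ t in (0:ℝ)..a, |t| ^ (-(1/2) : ℝ) = 2 * a ^ ((1:ℝ)/2) := by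
    rw [intervalIntegral.integral_congr (g := fun t : ℝ => t ^ (-(1/2) : ℝ))
      (fun x hx => by rw [abs_of_nonneg ((uIcc_of_le ha.le ▸ hx).1)])]
    rw [integral_rpow (Or.inl (by norm_num))]
    rw [Real.zero_rpow (by norm_num)]
    ring_nf
  have hneg : ∫ t in (-a)..(0:ℝ), |t| ^ (-(1/2) : ℝ) = 2 * a ^ ((1:ℝ)/2) := by
    have := intervalIntegral.integral_comp_neg (a := 0) (b := a)
      (fun t : ℝ => |t| ^ (-(1/2) : ℝ))
    simp only [abs_neg, neg_zero] at this
    rw [← this, hpos]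
  rw [hIoo, ← intervalIntegral.integral_add_adjacent_intervals h2 h1, hpos, hneg]
  ring

lemma meas1 (lam : ℝ) :
    Measurable fun t : ℝ =>
      ENNReal.ofReal (Real.log (max (Real.exp 1) (Real.exp 1 / |t|)) ^ lam) := by
  measurability

lemma meas2 (c : ℝ) :
    Measurable fun t : ℝ => ENNReal.ofReal (c * |t| ^ (-(1/2) : ℝ)) := by
  measurability

set_option maxHeartbeats 1000000 in
lemma key_bounds (lam : ℝ) (hlam : 0 < lam) (r : ℝ) (hr : 0 < r)
    (hr' : r < Real.exp (-(2*lam))) :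
    ENNReal.ofReal (Real.log (Real.exp 1 / r) ^ lam * r) ≤
      (∫⁻ t in Ioo (-(r/2)) (r/2),
        ENNReal.ofReal (Real.log (max (Real.exp 1) (Real.exp 1 / |t|)) ^ lam)) ∧
    (∫⁻ t in Ioo (-(r/2)) (r/2),
        ENNReal.ofReal (Real.log (max (Real.exp 1) (Real.exp 1 / |t|)) ^ lam)) ≤
      ENNReal.ofReal ((4 * max 1 (2*lam) ^ lam) * (Real.log (Real.exp 1 / r) ^ lam * r)) := by
  set M := max 1 (2*lam) with hMdef
  set L := Real.log (Real.exp 1 / r) with hLdef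
  have hr1 : r < 1 := lt_trans hr' (by
    rw [Real.exp_lt_one_iff]; linarith)
  have hL : 1 ≤ L := by
    rw [hLdef, Real.log_div (Real.exp_ne_zero 1) hr.ne', Real.log_exp]
    have := Real.log_neg hr hr1
    linarith
  have hL0 : 0 ≤ L := by linarith
  have h0 : ∀ᵐ t : ℝ, t ≠ 0 := by
    rw [ae_iff]
    simpa [not_not] using (measure_singleton (0:ℝ) : (volume : Measure ℝ) {0} = 0)
  have hvol : (volume : Measure ℝ) (Ioo (-(r/2)) (r/2)) = ENNReal.ofReal r := by
    rw [Real.volume_Ioo]; congr 1; ring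
  -- common facts for t in the interval, t ≠ 0
  have hfacts : ∀ t : ℝ, t ∈ Ioo (-(r/2)) (r/2) → t ≠ 0 →
      0 < |t| ∧ |t| < r / 2 ∧ max (Real.exp 1) (Real.exp 1 / |t|) = Real.exp 1 / |t| := by
    intro t ht ht0
    have habs : 0 < |t| := abs_pos.mpr ht0
    have habs2 : |t| < r / 2 := abs_lt.mpr ⟨ht.1, ht.2⟩
    refine ⟨habs, habs2, max_eq_right ?_⟩
    rw [le_div_iff₀ habs]
    nlinarith [Real.exp_pos 1]
  constructor
  · -- lower bound
    calc ENNReal.ofReal (L ^ lam * r)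
        = ENNReal.ofReal (L ^ lam) * volume (Ioo (-(r/2)) (r/2)) := by
          rw [hvol, ← ENNReal.ofReal_mul (by positivity)]
      _ = ∫⁻ _ in Ioo (-(r/2)) (r/2), ENNReal.ofReal (L ^ lam) := by
          rw [setLIntegral_const]
      _ ≤ _ := by
          refine setLIntegral_mono_ae (meas1 lam).aemeasurable ?_
          filter_upwards [h0] with t ht0 ht
          obtain ⟨habs, habs2, hmax⟩ := hfacts t ht ht0
          rw [hmax]
          apply ENNReal.ofReal_le_ofReal
          apply Real.rpow_le_rpow hL0 ?_ hlam.le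
          apply Real.log_le_log (by positivity)
          apply div_le_div_of_nonneg_left (Real.exp_pos 1).le habs
          linarith
  · -- upper bound
    have hM1 : 1 ≤ M := le_max_left _ _
    have hM2 : 2 * lam ≤ M := le_max_right _ _
    set c₀ := M ^ lam * L ^ lam * r ^ ((1:ℝ)/2) with hc₀
    have hc₀0 : 0 ≤ c₀ := by positivity
    have hpoint : ∀ t : ℝ, t ∈ Ioo (-(r/2)) (r/2) → t ≠ 0 →
        Real.log (max (Real.exp 1) (Real.exp 1 / |t|)) ^ lam ≤ c₀ * |t| ^ (-(1/2) : ℝ) := by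
      intro t ht ht0
      obtain ⟨habs, habs2, hmax⟩ := hfacts t ht ht0
      rw [hmax]
      set s := Real.log (r / |t|) with hs
      have hs0 : 0 ≤ s := Real.log_nonneg (by rw [le_div_iff₀ habs]; linarith)
      have hsplit : Real.log (Real.exp 1 / |t|) = L + s := by
        rw [hLdef, hs, Real.log_div (Real.exp_ne_zero 1) (ne_of_gt habs),
          Real.log_div (Real.exp_ne_zero 1) hr.ne', Real.log_div hr.ne' (ne_of_gt habs)]
        ring
      have hexp : 1 + s / (2*lam) ≤ Real.exp (s / (2*lam)) := by
        have := Real.add_one_le_exp (s / (2*lam)); linarith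
      have step2 : 1 + s ≤ M * Real.exp (s / (2*lam)) := by
        have h1 : 1 + s ≤ M * (1 + s / (2*lam)) := by
          have : M * (s / (2*lam)) ≥ (2*lam) * (s / (2*lam)) := by
            apply mul_le_mul_of_nonneg_right hM2 (by positivity)
          have h2 : (2*lam) * (s / (2*lam)) = s := by field_simp
          nlinarith
        calc 1 + s ≤ M * (1 + s / (2*lam)) := h1
          _ ≤ M * Real.exp (s / (2*lam)) :=
            mul_le_mul_of_nonneg_left hexp (by linarith)
      have hchain : Real.log (Real.exp 1 / |t|) ≤ L * (M * Real.exp (s / (2*lam))) := by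
        rw [hsplit]
        calc L + s ≤ L * (1 + s) := by nlinarith
          _ ≤ L * (M * Real.exp (s / (2*lam))) := by
            apply mul_le_mul_of_nonneg_left _ hL0
            calc 1 + s ≤ M * Real.exp (s / (2*lam)) := step2
              _ = M * Real.exp (s / (2*lam)) := rfl
      have hlognn : 0 ≤ Real.log (Real.exp 1 / |t|) := by rw [hsplit]; linarith
      have hrp : Real.log (Real.exp 1 / |t|) ^ lam ≤
          (L * (M * Real.exp (s / (2*lam)))) ^ lam :=
        Real.rpow_le_rpow hlognn hchain hlam.le
      have hexprw : Real.exp (s / (2*lam)) ^ lam = Real.exp (s / 2) := by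
        rw [← Real.exp_mul]
        congr 1
        field_simp
      have hsrw : Real.exp (s / 2) = r ^ ((1:ℝ)/2) * |t| ^ (-(1/2) : ℝ) := by
        have h1 : Real.exp (s / 2) = (r / |t|) ^ ((1:ℝ)/2) := by
          rw [Real.rpow_def_of_pos (by positivity), hs]
          congr 1
          ring
        rw [h1, Real.div_rpow hr.le (abs_nonneg t), Real.rpow_neg (abs_nonneg t),
          div_eq_mul_inv]
      calc Real.log (Real.exp 1 / |t|) ^ lam
          ≤ (L * (M * Real.exp (s / (2*lam)))) ^ lam := hrp
        _ = L ^ lam * (M ^ lam * Real.exp (s / (2*lam)) ^ lam) := by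
            rw [Real.mul_rpow hL0 (by positivity), Real.mul_rpow (by linarith) (Real.exp_pos _).le]
        _ = c₀ * |t| ^ (-(1/2) : ℝ) := by
            rw [hexprw, hsrw, hc₀]; ring
    calc (∫⁻ t in Ioo (-(r/2)) (r/2),
            ENNReal.ofReal (Real.log (max (Real.exp 1) (Real.exp 1 / |t|)) ^ lam))
        ≤ ∫⁻ t in Ioo (-(r/2)) (r/2), ENNReal.ofReal (c₀ * |t| ^ (-(1/2) : ℝ)) := by
          refine setLIntegral_mono_ae (meas2 c₀).aemeasurable ?_
          filter_upwards [h0] with t ht0 ht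
          exact ENNReal.ofReal_le_ofReal (hpoint t ht ht0)
      _ = ENNReal.ofReal c₀ * ∫⁻ t in Ioo (-(r/2)) (r/2),
            ENNReal.ofReal (|t| ^ (-(1/2) : ℝ)) := by
          simp_rw [ENNReal.ofReal_mul hc₀0]
          rw [lintegral_const_mul' _ _ ENNReal.ofReal_ne_top]
      _ = ENNReal.ofReal c₀ * ENNReal.ofReal (4 * (r/2) ^ ((1:ℝ)/2)) := by
          rw [lint_abs_rpow (r/2) (by linarith)]
      _ ≤ ENNReal.ofReal ((4 * M ^ lam) * (L ^ lam * r)) := by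
          rw [← ENNReal.ofReal_mul hc₀0]
          apply ENNReal.ofReal_le_ofReal
          have e1 : (r/2) ^ ((1:ℝ)/2) ≤ r ^ ((1:ℝ)/2) :=
            Real.rpow_le_rpow (by positivity) (by linarith) (by norm_num)
          have e2 : r ^ ((1:ℝ)/2) * r ^ ((1:ℝ)/2) = r := by
            rw [← Real.rpow_add hr]; norm_num
          calc c₀ * (4 * (r/2) ^ ((1:ℝ)/2))
              = 4 * (M ^ lam * L ^ lam) * (r ^ ((1:ℝ)/2) * (r/2) ^ ((1:ℝ)/2)) := by
                rw [hc₀]; ring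
            _ ≤ 4 * (M ^ lam * L ^ lam) * (r ^ ((1:ℝ)/2) * r ^ ((1:ℝ)/2)) := by
                apply mul_le_mul_of_nonneg_left _ (by positivity)
                exact mul_le_mul_of_nonneg_left e1 (by positivity)
            _ = (4 * M ^ lam) * (L ^ lam * r) := by rw [e2]; ring

/-- For `λ > 0` there are constants `0 < c ≤ C`, depending only on
`λ`, such that for every boundary point `(x₁, 0)` and every `0 < r < e^{-2λ}`, the open
axis-parallel square `Q((x₁,0), r)` of side length `r` satisfies
`c r² (log(e/r))^λ ≤ μ(Q) ≤ C r² (log(e/r))^λ`. -/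
theorem muW_square_estimate (lam : ℝ) (hlam : 0 < lam) :
    ∃ c C : ℝ, 0 < c ∧ c ≤ C ∧
      ∀ x₁ r : ℝ, 0 < r → r < Real.exp (-(2 * lam)) →
        ENNReal.ofReal (c * r ^ 2 * Real.log (Real.exp 1 / r) ^ lam) ≤
          muW lam (Set.Ioo (x₁ - r / 2) (x₁ + r / 2) ×ˢ Set.Ioo (-(r / 2)) (r / 2)) ∧
        muW lam (Set.Ioo (x₁ - r / 2) (x₁ + r / 2) ×ˢ Set.Ioo (-(r / 2)) (r / 2)) ≤
          ENNReal.ofReal (C * r ^ 2 * Real.log (Real.exp 1 / r) ^ lam) := by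
  refine ⟨1, 4 * max 1 (2*lam) ^ lam, one_pos, ?_, ?_⟩
  · have : (1:ℝ) ≤ max 1 (2*lam) ^ lam := by
      calc (1:ℝ) = 1 ^ lam := (Real.one_rpow lam).symm
        _ ≤ max 1 (2*lam) ^ lam :=
          Real.rpow_le_rpow zero_le_one (le_max_left _ _) hlam.le
    linarith
  intro x₁ r hr hr'
  have hvolA : (volume : Measure ℝ) (Ioo (x₁ - r/2) (x₁ + r/2)) = ENNReal.ofReal r := by
    rw [Real.volume_Ioo]; congr 1; ring
  have hprod := muW_prod lam (Ioo (x₁ - r/2) (x₁ + r/2)) (Ioo (-(r/2)) (r/2))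
    measurableSet_Ioo measurableSet_Ioo
  obtain ⟨hlow, hup⟩ := key_bounds lam hlam r hr hr'
  rw [hprod, hvolA]
  constructor
  · calc ENNReal.ofReal (1 * r ^ 2 * Real.log (Real.exp 1 / r) ^ lam)
        = ENNReal.ofReal r * ENNReal.ofReal (Real.log (Real.exp 1 / r) ^ lam * r) := by
          rw [← ENNReal.ofReal_mul hr.le]; congr 1; ring
      _ ≤ _ := mul_le_mul_right hlow _
  · calc ENNReal.ofReal r * ∫⁻ t in Ioo (-(r/2)) (r/2),
          ENNReal.ofReal (Real.log (max (Real.exp 1) (Real.exp 1 / |t|)) ^ lam)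
        ≤ ENNReal.ofReal r *
            ENNReal.ofReal ((4 * max 1 (2*lam) ^ lam) * (Real.log (Real.exp 1 / r) ^ lam * r)) :=
          mul_le_mul_right hup _
      _ = ENNReal.ofReal ((4 * max 1 (2*lam) ^ lam) * r ^ 2 * Real.log (Real.exp 1 / r) ^ lam) := by
          rw [← ENNReal.ofReal_mul hr.le]; congr 1; ring
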